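/- For the double-power ODE ẋ = −κ₁|x|^{γ₁} sgn(x) − κ₂|x|^{γ₂} sgn(x) with κ₁, κ₂ > 0, 0 < γ₁ < 1 < γ₂ and 0 < |x₀| < 1, the settling time satisfies ln(1 + (κ₂/κ₁)|x₀|^{1−γ₁})/(κ₂(1−γ₁)) ≤ T(x₀) ≤ |x₀|^{1−γ₁}/(κ₁(1−γ₁)). -/

import Mathlib

/-- Signed power `|y|^γ sgn(y)` appearing in the attracting laws. -/
noncomputable def spow (y γ : ℝ) : ℝ := |y| ^ γ * Real.sign y

lemma abs_rpow_hasDerivAt {κ₁ κ₂ γ₁ γ₂ : ℝ} (hγ₁1 : γ₁ < 1)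
    {x : ℝ → ℝ} {t : ℝ}
    (hx : HasDerivAt x (-κ₁ * spow (x t) γ₁ - κ₂ * spow (x t) γ₂) t)
    (hne : x t ≠ 0) :
    HasDerivAt (fun s => |x s| ^ (1 - γ₁))
      (-((1 - γ₁) * (κ₁ + κ₂ * |x t| ^ (γ₂ - γ₁)))) t := by
  have ha : 0 < |x t| := abs_pos.mpr hne
  have habs : HasDerivAt (fun s => |x s|)
      ((SignType.sign (x t) : ℝ) * (-κ₁ * spow (x t) γ₁ - κ₂ * spow (x t) γ₂)) t :=
    (hasDerivAt_abs hne).comp t hx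
  have hr : HasDerivAt (fun y : ℝ => y ^ (1 - γ₁))
      ((1 - γ₁) * |x t| ^ (1 - γ₁ - 1)) (|x t|) :=
    Real.hasDerivAt_rpow_const (Or.inl ha.ne')
  have hcomp := hr.comp t habs
  convert hcomp using 1
  rotate_left 3
  have hsr : (SignType.sign (x t) : ℝ) * Real.sign (x t) = 1 := by
    rcases lt_or_gt_of_ne hne with h | h
    · simp [Real.sign_of_neg h, h]
    · simp [Real.sign_of_pos h, h]
  have h1 : |x t| ^ (1 - γ₁ - 1) * |x t| ^ γ₁ = 1 := by
    rw [← Real.rpow_add ha]; norm_num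
  have h2 : |x t| ^ (1 - γ₁ - 1) * |x t| ^ γ₂ = |x t| ^ (γ₂ - γ₁) := by
    rw [← Real.rpow_add ha]; ring_nf
  calc -((1 - γ₁) * (κ₁ + κ₂ * |x t| ^ (γ₂ - γ₁)))
      = -((1 - γ₁) * (κ₁ * (|x t| ^ (1 - γ₁ - 1) * |x t| ^ γ₁)
          + κ₂ * (|x t| ^ (1 - γ₁ - 1) * |x t| ^ γ₂))
          * ((SignType.sign (x t) : ℝ) * Real.sign (x t))) := by
        rw [h1, h2, hsr]; ring
    _ = (1 - γ₁) * |x t| ^ (1 - γ₁ - 1) *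
          ((SignType.sign (x t) : ℝ) *
            (-κ₁ * (|x t| ^ γ₁ * Real.sign (x t)) - κ₂ * (|x t| ^ γ₂ * Real.sign (x t)))) := by
        ring
  all_goals rfl

theorem stmt_11 (κ₁ κ₂ γ₁ γ₂ : ℝ)
    (hκ₁ : 0 < κ₁) (hκ₂ : 0 < κ₂)
    (hγ₁0 : 0 < γ₁) (hγ₁1 : γ₁ < 1) (hγ₂ : 1 < γ₂)
    (x : ℝ → ℝ) (x₀ : ℝ) (hx0 : x 0 = x₀) (hx₀0 : 0 < |x₀|) (hx₀1 : |x₀| < 1)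
    (hode : ∀ t, 0 ≤ t →
      HasDerivAt x (-κ₁ * spow (x t) γ₁ - κ₂ * spow (x t) γ₂) t) :
    Real.log (1 + κ₂ / κ₁ * |x₀| ^ (1 - γ₁)) / (κ₂ * (1 - γ₁)) ≤
      sInf {t : ℝ | 0 ≤ t ∧ x t = 0} ∧
    sInf {t : ℝ | 0 ≤ t ∧ x t = 0} ≤ |x₀| ^ (1 - γ₁) / (κ₁ * (1 - γ₁)) := by
  have h1γ : 0 < 1 - γ₁ := by linarith
  set S : Set ℝ := {t : ℝ | 0 ≤ t ∧ x t = 0} with hS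
  set V : ℝ → ℝ := fun t => |x t| ^ (1 - γ₁) with hV
  have hVnonneg : ∀ t, 0 ≤ V t := fun t => Real.rpow_nonneg (abs_nonneg _) _
  have hcont : ∀ t, 0 ≤ t → ContinuousAt x t := fun t ht => (hode t ht).continuousAt
  have hVcont : ∀ t, 0 ≤ t → ContinuousAt V t := by
    intro t ht
    exact (Real.continuousAt_rpow_const _ _ (Or.inr h1γ.le)).comp
      ((hcont t ht).abs)
  have hVd : ∀ t, 0 ≤ t → x t ≠ 0 →
      HasDerivAt V (-((1 - γ₁) * (κ₁ + κ₂ * |x t| ^ (γ₂ - γ₁)))) t :=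
    fun t ht hne => abs_rpow_hasDerivAt hγ₁1 (hode t ht) hne
  set Tu : ℝ := |x₀| ^ (1 - γ₁) / (κ₁ * (1 - γ₁)) with hTu
  have hTu_pos : 0 < Tu :=
    div_pos (Real.rpow_pos_of_pos hx₀0 _) (by positivity)
  have hSbdd : BddBelow S := ⟨0, fun s hs => hs.1⟩
  -- key existence of a zero in [0, Tu]
  have key : ∃ t ∈ Set.Icc (0:ℝ) Tu, x t = 0 := by
    by_contra hcon
    push_neg at hcon
    set g : ℝ → ℝ := fun t => V t + κ₁ * (1 - γ₁) * t with hg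
    have hganti : AntitoneOn g (Set.Icc 0 Tu) := by
      apply antitoneOn_of_deriv_nonpos (convex_Icc 0 Tu)
      · intro t ht
        exact ((hVcont t ht.1).add (by fun_prop)).continuousWithinAt
      · intro t ht
        rw [interior_Icc] at ht
        exact (((hVd t ht.1.le (hcon t ⟨ht.1.le, ht.2.le⟩)).add
          ((hasDerivAt_id t).const_mul (κ₁ * (1 - γ₁)))).differentiableAt).differentiableWithinAt
      · intro t ht
        rw [interior_Icc] at ht
        have hd := (hVd t ht.1.le (hcon t ⟨ht.1.le, ht.2.le⟩)).add
          ((hasDerivAt_id t).const_mul (κ₁ * (1 - γ₁)))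
        have hd2 : HasDerivAt g
            (-((1 - γ₁) * (κ₁ + κ₂ * |x t| ^ (γ₂ - γ₁))) + κ₁ * (1 - γ₁)) t := by
          simp at hd; exact hd
        rw [hd2.deriv]
        have hp : 0 ≤ |x t| ^ (γ₂ - γ₁) := Real.rpow_nonneg (abs_nonneg _) _
        nlinarith [mul_nonneg (mul_nonneg h1γ.le hκ₂.le) hp]
    have hineq := hganti (Set.left_mem_Icc.mpr hTu_pos.le)
      (Set.right_mem_Icc.mpr hTu_pos.le) hTu_pos.le
    have hV0 : V 0 = |x₀| ^ (1 - γ₁) := by rw [hV]; simp [hx0]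
    have hκTu : κ₁ * (1 - γ₁) * Tu = |x₀| ^ (1 - γ₁) := by
      rw [hTu]; field_simp
    have hVTu : 0 < V Tu :=
      Real.rpow_pos_of_pos (abs_pos.mpr (hcon Tu ⟨hTu_pos.le, le_refl _⟩)) _
    simp only [hg] at hineq
    rw [hV0] at hineq
    nlinarith
  obtain ⟨t₀, ht₀, hxt₀⟩ := key
  have hSne : S.Nonempty := ⟨t₀, ht₀.1, hxt₀⟩
  have hupper : sInf S ≤ Tu := le_trans (csInf_le hSbdd ⟨ht₀.1, hxt₀⟩) ht₀.2
  refine ⟨?_, hupper⟩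
  -- lower bound
  set T : ℝ := sInf S with hT
  have hT0 : 0 ≤ T := le_csInf hSne fun s hs => hs.1
  have hxT : x T = 0 := by
    by_contra hne
    have hev : ∀ᶠ s in nhds T, x s ≠ 0 := (hcont T hT0).eventually_ne hne
    rw [Metric.eventually_nhds_iff] at hev
    obtain ⟨ε, hε, hball⟩ := hev
    obtain ⟨s, hsS, hs⟩ := exists_lt_of_csInf_lt hSne (show sInf S < T + ε by
      rw [← hT]; linarith)
    have hTs : T ≤ s := csInf_le hSbdd hsS
    exact hball (show dist s T < ε by rw [Real.dist_eq, abs_of_nonneg (by linarith)]; linarith)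
      hsS.2
  have hTpos : 0 < T := by
    rcases hT0.lt_or_eq with h | h
    · exact h
    · exfalso; rw [← h, hx0] at hxT; rw [hxT] at hx₀0; simp at hx₀0
  have hx_ne : ∀ t, 0 ≤ t → t < T → x t ≠ 0 := by
    intro t ht htT h0
    exact absurd (csInf_le hSbdd ⟨ht, h0⟩) (not_le.mpr htT)
  -- V is antitone on [0, T]
  have hVanti : AntitoneOn V (Set.Icc 0 T) := by
    apply antitoneOn_of_deriv_nonpos (convex_Icc 0 T)
    · exact fun t ht => (hVcont t ht.1).continuousWithinAt
    · intro t ht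
      rw [interior_Icc] at ht
      exact (hVd t ht.1.le (hx_ne t ht.1.le ht.2)).differentiableAt.differentiableWithinAt
    · intro t ht
      rw [interior_Icc] at ht
      rw [(hVd t ht.1.le (hx_ne t ht.1.le ht.2)).deriv]
      have hp : 0 ≤ |x t| ^ (γ₂ - γ₁) := Real.rpow_nonneg (abs_nonneg _) _
      have h' : 0 ≤ (1 - γ₁) * (κ₁ + κ₂ * |x t| ^ (γ₂ - γ₁)) :=
        mul_nonneg h1γ.le (by nlinarith [mul_nonneg hκ₂.le hp])
      linarith
  have hV0 : V 0 = |x₀| ^ (1 - γ₁) := by rw [hV]; simp [hx0]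
  have hV0lt1 : V 0 < 1 := by
    rw [hV0]; exact Real.rpow_lt_one (abs_nonneg _) hx₀1 h1γ
  have habs_lt1 : ∀ t, 0 ≤ t → t ≤ T → |x t| < 1 := by
    intro t ht htT
    by_contra hge
    push_neg at hge
    have h1le : (1:ℝ) ≤ V t := Real.one_le_rpow hge h1γ.le
    have := hVanti (Set.left_mem_Icc.mpr hT0) ⟨ht, htT⟩ ht
    linarith
  -- positivity of κ₁ + κ₂ * V t
  have hD : ∀ t, 0 < κ₁ + κ₂ * V t := fun t => by nlinarith [hVnonneg t]
  set g2 : ℝ → ℝ := fun t => Real.log (κ₁ + κ₂ * V t) + κ₂ * (1 - γ₁) * t with hg2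
  have hg2mono : MonotoneOn g2 (Set.Icc 0 T) := by
    apply monotoneOn_of_deriv_nonneg (convex_Icc 0 T)
    · intro t ht
      have hc : ContinuousAt (fun s => κ₁ + κ₂ * V s) t :=
        continuousAt_const.add (continuousAt_const.mul (hVcont t ht.1))
      have hlogc : ContinuousAt (fun s => Real.log (κ₁ + κ₂ * V s)) t :=
        ContinuousAt.comp (f := fun s => κ₁ + κ₂ * V s)
          (Real.continuousAt_log (hD t).ne') hc
      exact (hlogc.add (continuousAt_const.mul continuousAt_id)).continuousWithinAt
    · intro t ht
      rw [interior_Icc] at ht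
      have hd := ((((hVd t ht.1.le (hx_ne t ht.1.le ht.2)).const_mul κ₂).const_add κ₁).log
        (hD t).ne').add ((hasDerivAt_id t).const_mul (κ₂ * (1 - γ₁)))
      exact hd.differentiableAt.differentiableWithinAt
    · intro t ht
      rw [interior_Icc] at ht
      have hne := hx_ne t ht.1.le ht.2
      have ha : 0 < |x t| := abs_pos.mpr hne
      have hd := ((((hVd t ht.1.le hne).const_mul κ₂).const_add κ₁).log
        (hD t).ne').add ((hasDerivAt_id t).const_mul (κ₂ * (1 - γ₁)))
      have hd2 : HasDerivAt g2
          (κ₂ * -((1 - γ₁) * (κ₁ + κ₂ * |x t| ^ (γ₂ - γ₁))) / (κ₁ + κ₂ * V t)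
            + κ₂ * (1 - γ₁)) t := by
        simp at hd; rw [mul_neg]; exact hd
      rw [hd2.deriv]
      have hexp : |x t| ^ (γ₂ - γ₁) ≤ V t := by
        rw [hV]
        exact Real.rpow_le_rpow_of_exponent_ge ha (habs_lt1 t ht.1.le ht.2.le).le
          (by linarith)
      have hDt := hD t
      have hstep : -(κ₂ * (1 - γ₁)) ≤ κ₂ * -((1 - γ₁) * (κ₁ + κ₂ * |x t| ^ (γ₂ - γ₁))) / (κ₁ + κ₂ * V t) := by
        rw [le_div_iff₀ hDt]
        nlinarith [mul_nonneg (mul_nonneg (mul_nonneg hκ₂.le hκ₂.le) h1γ.le)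
          (sub_nonneg.mpr hexp)]
      linarith
  have hends := hg2mono (Set.left_mem_Icc.mpr hT0) (Set.right_mem_Icc.mpr hT0) hT0
  have hVT : V T = 0 := by
    rw [hV]; simp only [hxT, abs_zero]
    exact Real.zero_rpow h1γ.ne'
  simp only [hg2, hVT, hV0, mul_zero, add_zero, mul_one] at hends
  have hlog : Real.log (1 + κ₂ / κ₁ * |x₀| ^ (1 - γ₁)) =
      Real.log (κ₁ + κ₂ * |x₀| ^ (1 - γ₁)) - Real.log κ₁ := by
    rw [← Real.log_div (by positivity) hκ₁.ne']
    congr 1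
    field_simp
  rw [div_le_iff₀ (by positivity), hlog]
  linarith
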